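/- Let α be a stable exponent sequence, let (b_{n,k}) be a Köthe matrix, and let θ : ℕ → ℂ belong to the dual of Λ_∞(α), i.e., there exist m₀ ∈ ℕ and C₀ > 0 with |θ_n| ≤ C₀ e^{m₀ α_n} for all n. Assume that for every m ∈ ℕ the sequence (e^{m α_n})_n belongs to K(b_{n,k}), i.e., ∑_{n=0}^∞ e^{m α_n} b_{n,k} < ∞ for all k, m ∈ ℕ. Then there exists d ∈ ℕ such that for every k ∈ ℕ there is C > 0 with ∑_{j=0}^∞ |θ_{j+n}| · b_{j,k} ≤ C · e^{d α_n} for all n ∈ ℕ (i.e., the Hankel operator H_θ : Λ_∞(α) → K(b_{n,k}) is continuous and satisfies the compactness condition, the index d being independent of k). -/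
import Mathlib


/-- Let `α` be a stable exponent sequence and `θ` in the dual of
`Λ_∞(α)`. If `(e^{m α_n})_n ∈ K(b)` for every `m`, then the Hankel operator
`H_θ : Λ_∞(α) → K(b)` is continuous and satisfies the compactness condition
(the index `d` is independent of `k`). -/
theorem hankel_from_infinite_type_compact
    (α : ℕ → ℝ) (b : ℕ → ℕ → ℝ) (θ : ℕ → ℂ)
    (hα_nonneg : ∀ n, 0 ≤ α n) (hα_mono : Monotone α)
    (hα_tendsto : Filter.Tendsto α Filter.atTop Filter.atTop)
    (hα_stable : ∃ M : ℝ, 0 < M ∧ ∀ n : ℕ, α (2 * n) ≤ M * α n)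
    (hb_nonneg : ∀ n k, 0 ≤ b n k) (hb_mono : ∀ n k, b n k ≤ b n (k + 1))
    (hb_pos : ∀ n, ∃ k, 0 < b n k)
    (hθ : ∃ m₀ : ℕ, ∃ C₀ : ℝ, 0 < C₀ ∧ ∀ n : ℕ, ‖θ n‖ ≤ C₀ * Real.exp ((m₀ : ℝ) * α n))
    (hcond : ∀ m k : ℕ, Summable fun n : ℕ => Real.exp ((m : ℝ) * α n) * b n k) :
    ∃ d : ℕ, ∀ k : ℕ, ∃ C : ℝ, 0 < C ∧
      ∀ n : ℕ, (∑' j : ℕ, ‖θ (j + n)‖ * b j k) ≤ C * Real.exp ((d : ℝ) * α n) := by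
  obtain ⟨m₀, C₀, hC₀, hθ'⟩ := hθ
  obtain ⟨M, hM, hMle⟩ := hα_stable
  refine ⟨⌈(m₀ : ℝ) * M⌉₊, fun k => ?_⟩
  set d : ℕ := ⌈(m₀ : ℝ) * M⌉₊ with hd
  set S : ℝ := ∑' j, Real.exp ((d : ℝ) * α j) * b j k with hS
  have hSnn : 0 ≤ S :=
    tsum_nonneg fun j => mul_nonneg (Real.exp_pos _).le (hb_nonneg _ _)
  refine ⟨C₀ * (S + 1), by positivity, fun n => ?_⟩
  have key : ∀ j, ‖θ (j + n)‖ * b j k ≤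
      (C₀ * Real.exp ((d : ℝ) * α n)) * (Real.exp ((d : ℝ) * α j) * b j k) := by
    intro j
    have h1 : α (j + n) ≤ M * (α j + α n) := by
      have h2 : j + n ≤ 2 * max j n := by omega
      have h3 : α (max j n) ≤ α j + α n := by
        rcases le_total j n with h | h
        · rw [max_eq_right h]; linarith [hα_nonneg j]
        · rw [max_eq_left h]; linarith [hα_nonneg n]
      calc α (j + n) ≤ α (2 * max j n) := hα_mono h2
        _ ≤ M * α (max j n) := hMle _
        _ ≤ M * (α j + α n) := by
            exact mul_le_mul_of_nonneg_left h3 hM.le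
    have h4 : (m₀ : ℝ) * α (j + n) ≤ (d : ℝ) * α j + (d : ℝ) * α n := by
      have hdm : (m₀ : ℝ) * M ≤ (d : ℝ) := Nat.le_ceil _
      have h5 : (m₀ : ℝ) * α (j + n) ≤ (m₀ : ℝ) * M * (α j + α n) := by
        have := mul_le_mul_of_nonneg_left h1 (by positivity : (0:ℝ) ≤ (m₀:ℝ))
        linarith [this]
      have h6 : (m₀ : ℝ) * M * (α j + α n) ≤ (d : ℝ) * (α j + α n) :=
        mul_le_mul_of_nonneg_right hdm (add_nonneg (hα_nonneg j) (hα_nonneg n))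
      linarith
    have h7 : ‖θ (j + n)‖ ≤ C₀ * (Real.exp ((d : ℝ) * α j) * Real.exp ((d : ℝ) * α n)) := by
      rw [← Real.exp_add]
      exact (hθ' _).trans
        (mul_le_mul_of_nonneg_left (Real.exp_le_exp.mpr h4) hC₀.le)
    calc ‖θ (j + n)‖ * b j k
        ≤ (C₀ * (Real.exp ((d : ℝ) * α j) * Real.exp ((d : ℝ) * α n))) * b j k :=
          mul_le_mul_of_nonneg_right h7 (hb_nonneg _ _)
      _ = (C₀ * Real.exp ((d : ℝ) * α n)) * (Real.exp ((d : ℝ) * α j) * b j k) := by ring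
  have hsum : Summable fun j : ℕ =>
      (C₀ * Real.exp ((d : ℝ) * α n)) * (Real.exp ((d : ℝ) * α j) * b j k) :=
    (hcond d k).mul_left _
  have hsum' : Summable fun j : ℕ => ‖θ (j + n)‖ * b j k :=
    Summable.of_nonneg_of_le
      (fun j => mul_nonneg (norm_nonneg _) (hb_nonneg _ _)) key hsum
  calc (∑' j : ℕ, ‖θ (j + n)‖ * b j k)
      ≤ ∑' j : ℕ, (C₀ * Real.exp ((d : ℝ) * α n)) * (Real.exp ((d : ℝ) * α j) * b j k) :=
        Summable.tsum_le_tsum key hsum' hsum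
    _ = (C₀ * Real.exp ((d : ℝ) * α n)) * S := by rw [tsum_mul_left]
    _ ≤ (C₀ * (S + 1)) * Real.exp ((d : ℝ) * α n) := by
        have := Real.exp_pos ((d : ℝ) * α n)
        nlinarith
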